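/- Let γ : ℝ² ∖ {(−1,0),(1,0)} → ℝ² be the planar dipole field γ(r) = −(r₁ − r)/‖r₁ − r‖³ + (r₂ − r)/‖r₂ − r‖³ with r₁ = (−1,0), r₂ = (1,0). The determinant J(u,v) of the Jacobian matrix of γ satisfies J(u,v) ≤ 0 at every point (u,v) of the domain, and J(u,v) < 0 at every point (u,v) ≠ (0,0) of the domain; in particular γ is a submersion away from the origin. -/

import Mathlib

/-- Position of the body of mass `-1`. -/
noncomputable def rNeg : EuclideanSpace ℝ (Fin 2) := !₂[-1, 0]

/-- Position of the body of mass `1`. -/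
noncomputable def rPos : EuclideanSpace ℝ (Fin 2) := !₂[1, 0]

/-- The planar field generated by the dipole with masses `-1` at `(-1,0)` and `1` at `(1,0)`:
`γ(r) = -(r₁ - r)/‖r₁ - r‖³ + (r₂ - r)/‖r₂ - r‖³`. -/
noncomputable def dipoleField (r : EuclideanSpace ℝ (Fin 2)) : EuclideanSpace ℝ (Fin 2) :=
  -((1 / ‖rNeg - r‖ ^ 3) • (rNeg - r)) + (1 / ‖rPos - r‖ ^ 3) • (rPos - r)

open scoped RealInnerProductSpace

local notation "E2" => EuclideanSpace ℝ (Fin 2)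

/-- The derivative of `y ↦ y / ‖y‖³` at `x ≠ 0`. -/
noncomputable def Dg (x : E2) : E2 →L[ℝ] E2 :=
  (‖x‖ ^ 3)⁻¹ • ContinuousLinearMap.id ℝ E2
    - ((3 : ℝ) * (‖x‖ ^ 5)⁻¹) • ((innerSL ℝ x).smulRight x)

lemma rpow_help {s : ℝ} (hs : 0 < s) (n : ℕ) :
    (s ^ 2 : ℝ) ^ (-(n : ℝ) / 2) = (s ^ n)⁻¹ := by
  have h2 : ((2:ℕ):ℝ) * (-(n:ℝ)/2) = -(n:ℝ) := by push_cast; ring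
  rw [← Real.rpow_natCast s 2, ← Real.rpow_mul hs.le, h2, Real.rpow_neg hs.le,
    Real.rpow_natCast]

lemma hasFDerivAt_g {x : E2} (hx : x ≠ 0) :
    HasFDerivAt (fun y : E2 => (1 / ‖y‖ ^ 3) • y) (Dg x) x := by
  have hs : (0:ℝ) < ‖x‖ := norm_pos_iff.mpr hx
  have hq : HasFDerivAt (fun y : E2 => ‖y‖ ^ 2) (2 • innerSL ℝ x) x :=
    (hasStrictFDerivAt_norm_sq x).hasFDerivAt
  have hrp : HasDerivAt (fun t : ℝ => t ^ (-(3:ℝ)/2))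
      ((-(3:ℝ)/2) * (‖x‖^2) ^ ((-(3:ℝ)/2) - 1)) (‖x‖^2) :=
    Real.hasDerivAt_rpow_const (Or.inl (pow_ne_zero _ hs.ne'))
  have hφ : HasFDerivAt (fun y : E2 => (‖y‖^2) ^ (-(3:ℝ)/2))
      (((-(3:ℝ)/2) * (‖x‖^2) ^ ((-(3:ℝ)/2) - 1)) • (2 • innerSL ℝ x)) x :=
    HasDerivAt.comp_hasFDerivAt (f := fun y : E2 => ‖y‖^2) x hrp hq
  have key := hφ.smul (hasFDerivAt_id x)
  have hfun : (fun y : E2 => (‖y‖^2) ^ (-(3:ℝ)/2) • y) = fun y : E2 => (1 / ‖y‖ ^ 3) • y := by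
    funext y
    rcases eq_or_ne y 0 with rfl | hy
    · simp
    · have hy' : (0:ℝ) < ‖y‖ := norm_pos_iff.mpr hy
      rw [show -(3:ℝ)/2 = -((3:ℕ):ℝ)/2 by norm_num, rpow_help hy', one_div]
  simp only [id_eq] at key
  rw [show ((fun y : E2 => (‖y‖^2) ^ (-(3:ℝ)/2)) • id) = fun y : E2 => (‖y‖^2) ^ (-(3:ℝ)/2) • y from rfl, hfun] at key
  refine key.congr_fderiv ?_
  ext h i
  have e3 : (‖x‖^2 : ℝ) ^ (-(3:ℝ)/2) = (‖x‖ ^ 3)⁻¹ := by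
    rw [show -(3:ℝ)/2 = -((3:ℕ):ℝ)/2 by norm_num, rpow_help hs]
  have e5 : (‖x‖^2 : ℝ) ^ ((-(3:ℝ)/2) - 1) = (‖x‖ ^ 5)⁻¹ := by
    rw [show (-(3:ℝ)/2) - 1 = -((5:ℕ):ℝ)/2 by norm_num, rpow_help hs]
  simp [Dg, e3, e5, ContinuousLinearMap.smulRight_apply, smul_smul,
    PiLp.add_apply, PiLp.sub_apply, PiLp.smul_apply, smul_eq_mul]
  ring

lemma hasFDerivAt_dipole (r : E2) (h1 : r ≠ rNeg) (h2 : r ≠ rPos) :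
    HasFDerivAt dipoleField (Dg (rNeg - r) - Dg (rPos - r)) r := by
  have hx1 : rNeg - r ≠ 0 := sub_ne_zero_of_ne (Ne.symm h1)
  have hx2 : rPos - r ≠ 0 := sub_ne_zero_of_ne (Ne.symm h2)
  have ha : HasFDerivAt (fun y : E2 => rNeg - y) (0 - ContinuousLinearMap.id ℝ E2) r :=
    (hasFDerivAt_const rNeg r).sub (hasFDerivAt_id r)
  have hb : HasFDerivAt (fun y : E2 => rPos - y) (0 - ContinuousLinearMap.id ℝ E2) r :=
    (hasFDerivAt_const rPos r).sub (hasFDerivAt_id r)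
  have k1 := ((hasFDerivAt_g hx1).comp r ha).neg
  have k2 := (hasFDerivAt_g hx2).comp r hb
  have key := k1.add k2
  refine key.congr_fderiv ?_
  ext h i
  simp [Dg, ContinuousLinearMap.smulRight_apply, Function.comp]
  ring

lemma det_Dg_sub (x y : E2) :
    (Dg x - Dg y).det =
      ((‖x‖^3)⁻¹ - 3*(‖x‖^5)⁻¹*(x 0)^2 - ((‖y‖^3)⁻¹ - 3*(‖y‖^5)⁻¹*(y 0)^2)) *
      ((‖x‖^3)⁻¹ - 3*(‖x‖^5)⁻¹*(x 1)^2 - ((‖y‖^3)⁻¹ - 3*(‖y‖^5)⁻¹*(y 1)^2)) -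
      (3*(‖x‖^5)⁻¹*(x 0)*(x 1) - 3*(‖y‖^5)⁻¹*(y 0)*(y 1))^2 := by
  rw [show (Dg x - Dg y).det = LinearMap.det ((Dg x - Dg y : E2 →L[ℝ] E2) : E2 →ₗ[ℝ] E2) from rfl,
    ← LinearMap.det_toMatrix (PiLp.basisFun 2 ℝ (Fin 2)), Matrix.det_fin_two]
  simp [LinearMap.toMatrix_apply, PiLp.basisFun_repr, PiLp.basisFun_apply, Dg,
    ContinuousLinearMap.smulRight_apply, EuclideanSpace.inner_single_right]
  ring

lemma key_formula (s t a1 b1 a2 b2 : ℝ) (hs : 0 < s) (ht : 0 < t)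
    (hs2 : s^2 = a1^2+b1^2) (ht2 : t^2 = a2^2+b2^2) :
    (((s^3)⁻¹ - 3*(s^5)⁻¹*a1^2 - ((t^3)⁻¹ - 3*(t^5)⁻¹*a2^2)) *
    ((s^3)⁻¹ - 3*(s^5)⁻¹*b1^2 - ((t^3)⁻¹ - 3*(t^5)⁻¹*b2^2)) -
    (3*(s^5)⁻¹*a1*b1 - 3*(t^5)⁻¹*a2*b2)^2) * (s^6*t^6)
    = -(2*(s^3-t^3)^2 + 9*s*t*(a1*b2-a2*b1)^2) := by
  have hs0 : s ≠ 0 := hs.ne'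
  have ht0 : t ≠ 0 := ht.ne'
  field_simp
  linear_combination (3*s^2*t^10 - 3*s^5*t^7) * hs2 + (3*s^10*t^2 - 3*s^7*t^5) * ht2

lemma key_formula' (s t a1 b1 a2 b2 : ℝ) (hs : 0 < s) (ht : 0 < t)
    (hs2 : s^2 = a1^2+b1^2) (ht2 : t^2 = a2^2+b2^2) :
    ((s^3)⁻¹ - 3*(s^5)⁻¹*a1^2 - ((t^3)⁻¹ - 3*(t^5)⁻¹*a2^2)) *
    ((s^3)⁻¹ - 3*(s^5)⁻¹*b1^2 - ((t^3)⁻¹ - 3*(t^5)⁻¹*b2^2)) -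
    (3*(s^5)⁻¹*a1*b1 - 3*(t^5)⁻¹*a2*b2)^2
    = -(2*(s^3-t^3)^2 + 9*s*t*(a1*b2-a2*b1)^2) / (s^6*t^6) := by
  rw [eq_div_iff (by positivity)]
  exact key_formula s t a1 b1 a2 b2 hs ht hs2 ht2

/-- The dipole field is differentiable on its domain, the determinant of its Jacobian
matrix (the determinant of its Fréchet derivative) is nonpositive everywhere on the
domain, and it is negative away from the origin; in particular the dipole field is a
submersion away from the origin. -/
theorem dipole_jacobian_det_nonpos
    (r : EuclideanSpace ℝ (Fin 2)) (hr₁ : r ≠ rNeg) (hr₂ : r ≠ rPos) :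
    DifferentiableAt ℝ dipoleField r ∧
    (fderiv ℝ dipoleField r).det ≤ 0 ∧
    (r ≠ 0 →
      (fderiv ℝ dipoleField r).det < 0 ∧ Function.Surjective (fderiv ℝ dipoleField r)) := by
  have hL := hasFDerivAt_dipole r hr₁ hr₂
  have hfd : fderiv ℝ dipoleField r = Dg (rNeg - r) - Dg (rPos - r) := hL.fderiv
  have hx1 : rNeg - r ≠ 0 := sub_ne_zero_of_ne (Ne.symm hr₁)
  have hx2 : rPos - r ≠ 0 := sub_ne_zero_of_ne (Ne.symm hr₂)
  have hs : (0:ℝ) < ‖rNeg - r‖ := norm_pos_iff.mpr hx1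
  have ht : (0:ℝ) < ‖rPos - r‖ := norm_pos_iff.mpr hx2
  have hs2 : ‖rNeg - r‖^2 = ((rNeg - r) 0)^2 + ((rNeg - r) 1)^2 := by
    rw [EuclideanSpace.norm_eq, Real.sq_sqrt (by positivity)]
    simp [Fin.sum_univ_two, sq_abs]
  have ht2 : ‖rPos - r‖^2 = ((rPos - r) 0)^2 + ((rPos - r) 1)^2 := by
    rw [EuclideanSpace.norm_eq, Real.sq_sqrt (by positivity)]
    simp [Fin.sum_univ_two, sq_abs]
  have c0 : (rNeg - r) 0 = -1 - r 0 := by simp [rNeg]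
  have c1 : (rNeg - r) 1 = -(r 1) := by simp [rNeg]
  have d0 : (rPos - r) 0 = 1 - r 0 := by simp [rPos]
  have d1 : (rPos - r) 1 = -(r 1) := by simp [rPos]
  set s := ‖rNeg - r‖ with hsdef
  set t := ‖rPos - r‖ with htdef
  have hcross : (rNeg - r) 0 * (rPos - r) 1 - (rPos - r) 0 * (rNeg - r) 1 = 2 * r 1 := by
    rw [c0, c1, d0, d1]; ring
  have hdet : (fderiv ℝ dipoleField r).det =
      -(2*(s^3-t^3)^2 + 9*s*t*(2 * r 1)^2) / (s^6*t^6) := by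
    rw [hfd, det_Dg_sub,
      key_formula' s t ((rNeg - r) 0) ((rNeg - r) 1) ((rPos - r) 0) ((rPos - r) 1)
        hs ht hs2 ht2, hcross]
  refine ⟨hL.differentiableAt, ?_, ?_⟩
  · rw [hdet]
    apply div_nonpos_of_nonpos_of_nonneg
    · have h1 : (0:ℝ) ≤ 2*(s^3-t^3)^2 + 9*s*t*(2 * r 1)^2 := by positivity
      linarith
    · positivity
  · intro hr0
    have hne : r 0 ≠ 0 ∨ r 1 ≠ 0 := by
      by_contra h
      push_neg at h
      apply hr0
      ext i
      fin_cases i <;> simp [h.1, h.2]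
    have hnum : 0 < 2*(s^3-t^3)^2 + 9*s*t*(2 * r 1)^2 := by
      rcases hne with h | h
      · have hd : s^2 - t^2 = 4 * r 0 := by
          rw [hs2, ht2, c0, c1, d0, d1]; ring
        have hst : s - t ≠ 0 := by
          intro e
          have hst' : s = t := by linarith
          apply h
          rw [hst'] at hd
          linarith
        have h3 : s^3 - t^3 ≠ 0 := by
          have hfac : s^3 - t^3 = (s - t) * (s^2 + s*t + t^2) := by ring
          rw [hfac]
          exact mul_ne_zero hst (by positivity)
        have h4 : 0 < (s^3 - t^3)^2 := by positivity
        have h5 : (0:ℝ) ≤ 9*s*t*(2 * r 1)^2 := by positivity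
        linarith
      · have h4 : 0 < 9*s*t*(2 * r 1)^2 := by positivity
        nlinarith [sq_nonneg (s^3 - t^3)]
    have hlt : (fderiv ℝ dipoleField r).det < 0 := by
      rw [hdet]
      apply div_neg_of_neg_of_pos
      · linarith
      · positivity
    refine ⟨hlt, ?_⟩
    have hdne : LinearMap.det ((fderiv ℝ dipoleField r : E2 →L[ℝ] E2) : E2 →ₗ[ℝ] E2) ≠ 0 :=
      ne_of_lt hlt
    have hmat : IsUnit (LinearMap.toMatrix (PiLp.basisFun 2 ℝ (Fin 2)) (PiLp.basisFun 2 ℝ (Fin 2))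
        ((fderiv ℝ dipoleField r : E2 →L[ℝ] E2) : E2 →ₗ[ℝ] E2)).det := by
      rw [LinearMap.det_toMatrix]
      exact isUnit_iff_ne_zero.mpr hdne
    have hrange := Matrix.range_toLin_eq_top (PiLp.basisFun 2 ℝ (Fin 2)) _ hmat
    rw [Matrix.toLin_toMatrix] at hrange
    intro w
    obtain ⟨z, hz⟩ := LinearMap.range_eq_top.mp hrange w
    exact ⟨z, hz⟩
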